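/- Let p, p₁, p₂, … be probability distributions on ℤ₊ with pₙ → p in distribution and p(0) > 0. Then the extinction probabilities converge: η(pₙ) → η(p), where η(q) denotes the smallest fixed point of the generating function G_q in [0,1]. -/

import Mathlib

open Filter

/-- Probability generating function `G_p(s) = ∑ p(k) s^k`. -/
noncomputable def pgf (p : ℕ → ℝ) (s : ℝ) : ℝ := ∑' k : ℕ, p k * s ^ k

/-- Extinction probability: the smallest fixed point of `G_p` in `[0,1]`. -/
noncomputable def eta (p : ℕ → ℝ) : ℝ :=
  sInf {s : ℝ | s ∈ Set.Icc (0 : ℝ) 1 ∧ pgf p s = s}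

section Aux

variable {r : ℕ → ℝ}

lemma pgf_summable (h0 : ∀ k, 0 ≤ r k) (h1 : Summable r) {s : ℝ} (hs : |s| ≤ 1) :
    Summable (fun k => r k * s ^ k) := by
  refine Summable.of_norm_bounded h1 (fun k => ?_)
  rw [norm_mul, norm_pow]
  calc ‖r k‖ * ‖s‖ ^ k ≤ ‖r k‖ * 1 := by
        refine mul_le_mul_of_nonneg_left ?_ (norm_nonneg _)
        exact pow_le_one₀ (norm_nonneg _) (by rwa [Real.norm_eq_abs])
    _ = r k := by rw [mul_one, Real.norm_eq_abs, abs_of_nonneg (h0 k)]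

lemma pgf_one (h1 : HasSum r 1) : pgf r 1 = 1 := by
  simp [pgf, h1.tsum_eq]

lemma pgf_zero : pgf r 0 = r 0 := by
  rw [pgf, tsum_eq_single 0 (fun k hk => by simp [zero_pow hk])]
  simp

lemma pgf_continuousOn (h0 : ∀ k, 0 ≤ r k) (h1 : Summable r) :
    ContinuousOn (pgf r) (Set.Icc (0 : ℝ) 1) := by
  refine continuousOn_tsum (fun k => (continuous_const.mul (continuous_pow k)).continuousOn)
    h1 (fun k x hx => ?_)
  rw [norm_mul, norm_pow]
  calc ‖r k‖ * ‖x‖ ^ k ≤ ‖r k‖ * 1 := by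
        refine mul_le_mul_of_nonneg_left ?_ (norm_nonneg _)
        refine pow_le_one₀ (norm_nonneg _) ?_
        rw [Real.norm_eq_abs, abs_le]; exact ⟨by linarith [hx.1], hx.2⟩
    _ = r k := by rw [mul_one, Real.norm_eq_abs, abs_of_nonneg (h0 k)]

lemma fixedSet_nonempty (h1 : HasSum r 1) :
    (1 : ℝ) ∈ {s : ℝ | s ∈ Set.Icc (0 : ℝ) 1 ∧ pgf r s = s} :=
  ⟨⟨zero_le_one, le_refl 1⟩, pgf_one h1⟩

lemma fixedSet_bddBelow :
    BddBelow {s : ℝ | s ∈ Set.Icc (0 : ℝ) 1 ∧ pgf r s = s} :=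
  ⟨0, fun _ hx => hx.1.1⟩

lemma eta_isFixed (h0 : ∀ k, 0 ≤ r k) (h1 : HasSum r 1) :
    eta r ∈ Set.Icc (0 : ℝ) 1 ∧ pgf r (eta r) = eta r := by
  have hclosed : IsClosed {s : ℝ | s ∈ Set.Icc (0 : ℝ) 1 ∧ pgf r s = s} := by
    have : {s : ℝ | s ∈ Set.Icc (0 : ℝ) 1 ∧ pgf r s = s} =
        Set.Icc (0 : ℝ) 1 ∩ (fun s => pgf r s - s) ⁻¹' {0} := by
      ext x; simp [sub_eq_zero]
    rw [this]
    exact ContinuousOn.preimage_isClosed_of_isClosed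
      ((pgf_continuousOn h0 h1.summable).sub continuousOn_id) isClosed_Icc isClosed_singleton
  have hcpt : IsCompact {s : ℝ | s ∈ Set.Icc (0 : ℝ) 1 ∧ pgf r s = s} :=
    isCompact_Icc.of_isClosed_subset hclosed (fun x hx => hx.1)
  exact hcpt.sInf_mem ⟨1, fixedSet_nonempty h1⟩

lemma eta_le (h1 : HasSum r 1) {c : ℝ} (hc : c ∈ Set.Icc (0 : ℝ) 1) (hfix : pgf r c = c) :
    eta r ≤ c :=
  csInf_le fixedSet_bddBelow ⟨hc, hfix⟩

/-- Below the extinction probability, the pgf is strictly above the diagonal. -/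
lemma lt_pgf_of_lt_eta (h0 : ∀ k, 0 ≤ r k) (h1 : HasSum r 1) (h00 : 0 < r 0)
    {s : ℝ} (hs : s ∈ Set.Ico (0 : ℝ) (eta r)) : s < pgf r s := by
  have hone : eta r ≤ 1 := eta_le h1 ⟨zero_le_one, le_refl 1⟩ (pgf_one h1)
  have hs1 : s ≤ 1 := le_trans hs.2.le hone
  rcases lt_trichotomy s (pgf r s) with h | h | h
  · exact h
  · exact absurd (eta_le h1 ⟨hs.1, hs1⟩ h.symm) (not_le.2 hs.2)
  · -- pgf r s < s : get a fixed point below s via IVT, contradiction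
    exfalso
    have hcont : ContinuousOn (fun x => pgf r x - x) (Set.Icc (0:ℝ) s) :=
      ((pgf_continuousOn h0 h1.summable).mono
        (Set.Icc_subset_Icc le_rfl hs1)).sub continuousOn_id
    have hIV := intermediate_value_Icc' hs.1 hcont
    have h0mem : (0 : ℝ) ∈ Set.Icc ((fun x => pgf r x - x) s) ((fun x => pgf r x - x) 0) := by
      constructor
      · simp only []; linarith
      · simp only [pgf_zero, sub_zero]; linarith
    obtain ⟨c, hcmem, hc⟩ := hIV h0mem
    have hcfix : pgf r c = c := by
      have : pgf r c - c = 0 := hc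
      linarith
    have : eta r ≤ c := eta_le h1 ⟨hcmem.1, le_trans hcmem.2 hs1⟩ hcfix
    have : eta r ≤ s := le_trans this hcmem.2
    exact absurd this (not_le.2 hs.2)

/-- Above the extinction probability (when it is `< 1`), the pgf is strictly below
the diagonal, for distributions with positive mass at 0. -/
lemma pgf_lt_of_gt_eta (h0 : ∀ k, 0 ≤ r k) (h1 : HasSum r 1) (h00 : 0 < r 0)
    (hlt : eta r < 1) {t : ℝ} (ht : t ∈ Set.Ioo (eta r) 1) : pgf r t < t := by
  obtain ⟨hη01, hηfix⟩ := eta_isFixed h0 h1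
  set η := eta r with hηdef
  by_cases hk : ∃ k, 2 ≤ k ∧ 0 < r k
  · obtain ⟨k₀, hk₀2, hk₀pos⟩ := hk
    set a : ℝ := (1 - t) / (1 - η) with hadef
    set b : ℝ := (t - η) / (1 - η) with hbdef
    have h1η : (0:ℝ) < 1 - η := by linarith
    have ha : 0 < a := div_pos (by linarith [ht.2]) h1η
    have hb : 0 < b := div_pos (by linarith [ht.1]) h1η
    have hab : a + b = 1 := by
      rw [hadef, hbdef, ← add_div, div_eq_one_iff_eq (ne_of_gt h1η)]; ring
    have hcomb : a * η + b = t := by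
      rw [hadef, hbdef, div_mul_eq_mul_div, ← add_div,
        div_eq_iff (ne_of_gt h1η)]; ring
    have hle : ∀ k, r k * t ^ k ≤ r k * (a * η ^ k + b) := by
      intro k
      refine mul_le_mul_of_nonneg_left ?_ (h0 k)
      have := (convexOn_pow (𝕜 := ℝ) k).2 (Set.mem_Ici.2 hη01.1) (Set.mem_Ici.2 zero_le_one)
        ha.le hb.le hab
      simpa [smul_eq_mul, hcomb] using this
    have hltk : r k₀ * t ^ k₀ < r k₀ * (a * η ^ k₀ + b) := by
      refine mul_lt_mul_of_pos_left ?_ hk₀pos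
      have := (strictConvexOn_pow hk₀2).2 (Set.mem_Ici.2 hη01.1) (Set.mem_Ici.2 zero_le_one)
        (by intro h; exact absurd h (ne_of_lt hlt)) ha hb hab
      simpa [smul_eq_mul, hcomb] using this
    have hsum1 : Summable (fun k => r k * t ^ k) :=
      pgf_summable h0 h1.summable (abs_le.2 ⟨by linarith [ht.1, hη01.1], ht.2.le⟩)
    have hsumη : Summable (fun k => r k * η ^ k) :=
      pgf_summable h0 h1.summable (abs_le.2 ⟨by linarith [hη01.1], hη01.2⟩)
    have hsum2 : Summable (fun k => r k * (a * η ^ k + b)) := by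
      refine Summable.congr (f := fun k => a * (r k * η ^ k) + b * r k) ?_ (fun k => by ring)
      exact (hsumη.mul_left a).add (h1.summable.mul_left b)
    have hmain : pgf r t < ∑' k, r k * (a * η ^ k + b) :=
      Summable.tsum_lt_tsum hle hltk hsum1 hsum2
    have hrhs : ∑' k, r k * (a * η ^ k + b) = t := by
      have : ∀ k, r k * (a * η ^ k + b) = a * (r k * η ^ k) + b * r k := by
        intro k; ring
      rw [tsum_congr this, Summable.tsum_add (hsumη.mul_left a) (h1.summable.mul_left b),
        tsum_mul_left, tsum_mul_left, h1.tsum_eq]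
      show a * pgf r η + b * 1 = t
      rw [hηfix]; rw [mul_one]; exact hcomb
    rw [hrhs] at hmain
    exact hmain
  · -- r supported on {0,1}: eta = 1, contradiction
    exfalso
    push_neg at hk
    have hzero : ∀ k, 2 ≤ k → r k = 0 := fun k h2 => le_antisymm (hk k h2) (h0 k)
    have hG : ∀ s : ℝ, pgf r s = r 0 + r 1 * s := by
      intro s
      rw [pgf, tsum_eq_sum (s := {0, 1}) (fun k hks => ?_)]
      · simp
      · have : 2 ≤ k := by
          rcases Nat.lt_or_ge k 2 with h | h
          · interval_cases k <;> simp_all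
          · exact h
        simp [hzero k this]
    have hsum01 : r 0 + r 1 = 1 := by
      rw [← h1.tsum_eq, tsum_eq_sum (s := ({0, 1} : Finset ℕ)) (fun k hks => ?_)]
      · simp
      · have : 2 ≤ k := by
          rcases Nat.lt_or_ge k 2 with h | h
          · interval_cases k <;> simp_all
          · exact h
        exact hzero k this
    have := hηfix
    rw [hG] at this
    -- r 0 + r 1 * η = η with r 1 = 1 - r 0 gives r 0 * (1 - η) = 0
    have : r 0 * (1 - η) = 0 := by nlinarith
    have : 1 - η = 0 := by
      rcases mul_eq_zero.1 this with h | h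
      · exact absurd h (ne_of_gt h00)
      · exact h
    linarith

/-- Uniform (in `s ∈ [-1,1]`) bound on the difference of pgfs by total variation. -/
lemma pgf_dist_le {a b : ℕ → ℝ} (ha0 : ∀ k, 0 ≤ a k) (hb0 : ∀ k, 0 ≤ b k)
    (ha : Summable a) (hb : Summable b) {s : ℝ} (hs : |s| ≤ 1) :
    |pgf a s - pgf b s| ≤ ∑' k, |a k - b k| := by
  have hsa := pgf_summable ha0 ha hs
  have hsb := pgf_summable hb0 hb hs
  have habs : Summable (fun k => |a k - b k|) := (summable_abs_iff).2 (ha.sub hb)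
  have hdiff : pgf a s - pgf b s = ∑' k, (a k - b k) * s ^ k := by
    rw [pgf, pgf, ← Summable.tsum_sub hsa hsb]
    exact tsum_congr (fun k => by ring)
  rw [hdiff]
  have hsum3 : Summable (fun k => ‖(a k - b k) * s ^ k‖) := by
    refine Summable.of_nonneg_of_le (fun k => norm_nonneg _) (fun k => ?_) habs
    rw [norm_mul, norm_pow, Real.norm_eq_abs, Real.norm_eq_abs]
    calc |a k - b k| * |s| ^ k ≤ |a k - b k| * 1 :=
          mul_le_mul_of_nonneg_left (pow_le_one₀ (abs_nonneg _) hs) (abs_nonneg _)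
      _ = |a k - b k| := mul_one _
  calc |∑' k, (a k - b k) * s ^ k| ≤ ∑' k, ‖(a k - b k) * s ^ k‖ :=
        norm_tsum_le_tsum_norm hsum3
    _ ≤ ∑' k, |a k - b k| := by
        refine Summable.tsum_le_tsum (fun k => ?_) hsum3 habs
        rw [norm_mul, norm_pow, Real.norm_eq_abs, Real.norm_eq_abs]
        calc |a k - b k| * |s| ^ k ≤ |a k - b k| * 1 :=
              mul_le_mul_of_nonneg_left (pow_le_one₀ (abs_nonneg _) hs) (abs_nonneg _)
          _ = |a k - b k| := mul_one _

end Aux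

/-- Scheffé: pointwise convergence of probability mass functions implies
total variation convergence. -/
lemma tv_tendsto (p : ℕ → ℕ → ℝ) (q : ℕ → ℝ)
    (hp : ∀ n, (∀ k, 0 ≤ p n k) ∧ HasSum (p n) 1)
    (hq : (∀ k, 0 ≤ q k) ∧ HasSum q 1)
    (hconv : ∀ k, Tendsto (fun n => p n k) atTop (nhds (q k))) :
    Tendsto (fun n => ∑' k, |p n k - q k|) atTop (nhds 0) := by
  have hqs : Summable q := hq.2.summable
  have hmin_sum : ∀ n, Summable (fun k => min (p n k) (q k)) := fun n =>
    Summable.of_nonneg_of_le (fun k => le_min ((hp n).1 k) (hq.1 k))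
      (fun k => min_le_right _ _) hqs
  have hM : Tendsto (fun n => ∑' k, min (p n k) (q k)) atTop (nhds 1) := by
    have := tendsto_tsum_of_dominated_convergence (𝓕 := atTop)
      (f := fun n k => min (p n k) (q k)) (g := fun k => q k) (bound := q) hqs
      (fun k => by simpa [min_self] using (hconv k).min (tendsto_const_nhds (x := q k)))
      (Eventually.of_forall (fun n k => by
        rw [Real.norm_eq_abs, abs_of_nonneg (le_min ((hp n).1 k) (hq.1 k))]
        exact min_le_right _ _))
    simpa [hq.2.tsum_eq] using this
  have hd : ∀ n, ∑' k, |p n k - q k| = 2 - 2 * ∑' k, min (p n k) (q k) := by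
    intro n
    have h1 : ∀ k, |p n k - q k| = p n k + q k - 2 * min (p n k) (q k) := by
      intro k
      rcases le_total (p n k) (q k) with h | h
      · rw [abs_of_nonpos (by linarith), min_eq_left h]; ring
      · rw [abs_of_nonneg (by linarith), min_eq_right h]; ring
    rw [tsum_congr h1, Summable.tsum_sub (((hp n).2.summable).add hqs)
      ((hmin_sum n).mul_left 2), Summable.tsum_add ((hp n).2.summable) hqs, tsum_mul_left,
      (hp n).2.tsum_eq, hq.2.tsum_eq]
    ring
  have : Tendsto (fun n => 2 - 2 * ∑' k, min (p n k) (q k)) atTop (nhds 0) := by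
    have := (tendsto_const_nhds (x := (2:ℝ)) (f := atTop)).sub (hM.const_mul 2)
    simpa using this
  exact Tendsto.congr (fun n => (hd n).symm) this

/-- If probability distributions `pₙ` on ℤ₊ converge in distribution to `p`
(equivalently, pointwise) and `p(0) > 0`, then `η(pₙ) → η(p)`. -/
theorem eta_tendsto (p : ℕ → ℕ → ℝ) (q : ℕ → ℝ)
    (hp : ∀ n, (∀ k, 0 ≤ p n k) ∧ HasSum (p n) 1)
    (hq : (∀ k, 0 ≤ q k) ∧ HasSum q 1)
    (hconv : ∀ k, Tendsto (fun n => p n k) atTop (nhds (q k)))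
    (h0 : 0 < q 0) :
    Tendsto (fun n => eta (p n)) atTop (nhds (eta q)) := by
  have htv := tv_tendsto p q hp hq hconv
  obtain ⟨hqmem, hqfix⟩ := eta_isFixed hq.1 hq.2
  have hηn : ∀ n, eta (p n) ∈ Set.Icc (0:ℝ) 1 ∧ pgf (p n) (eta (p n)) = eta (p n) :=
    fun n => eta_isFixed (hp n).1 (hp n).2
  rw [Metric.tendsto_nhds]
  intro ε hε
  have hlower : ∀ᶠ n in atTop, eta q - ε < eta (p n) := by
    by_cases hcase : eta q - ε < 0
    · exact Eventually.of_forall (fun n => lt_of_lt_of_le hcase (hηn n).1.1)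
    · push_neg at hcase
      set s₀ := eta q - ε with hs₀def
      have hs₀lt : s₀ < eta q := by simp [hs₀def]; linarith
      -- min of pgf q - id on [0, s₀]
      have hs₀le1 : s₀ ≤ 1 := le_trans hs₀lt.le hqmem.2
      have hcont : ContinuousOn (fun s => pgf q s - s) (Set.Icc 0 s₀) :=
        ((pgf_continuousOn hq.1 hq.2.summable).mono
          (Set.Icc_subset_Icc le_rfl hs₀le1)).sub continuousOn_id
      obtain ⟨x₀, hx₀mem, hx₀min⟩ := isCompact_Icc.exists_isMinOn
        (Set.nonempty_Icc.2 hcase) hcont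
      have hδpos : 0 < pgf q x₀ - x₀ := by
        have : x₀ ∈ Set.Ico (0:ℝ) (eta q) := ⟨hx₀mem.1, lt_of_le_of_lt hx₀mem.2 hs₀lt⟩
        linarith [lt_pgf_of_lt_eta hq.1 hq.2 h0 this]
      set δ := pgf q x₀ - x₀ with hδdef
      filter_upwards [htv.eventually (gt_mem_nhds hδpos)] with n hn
      by_contra hcon
      push_neg at hcon
      -- eta (p n) ∈ [0, s₀], but pgf (p n) > id there
      have hmem : eta (p n) ∈ Set.Icc 0 s₀ := ⟨(hηn n).1.1, hcon⟩
      have habs1 : |eta (p n)| ≤ 1 := abs_le.2 ⟨by linarith [(hηn n).1.1], (hηn n).1.2⟩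
      have hdist := pgf_dist_le (hp n).1 hq.1 (hp n).2.summable hq.2.summable habs1
      have hmin := hx₀min hmem
      simp only [IsMinOn, IsMinFilter] at hmin
      have : δ ≤ pgf q (eta (p n)) - eta (p n) := hx₀min hmem
      have : pgf (p n) (eta (p n)) > eta (p n) := by
        have h1 : pgf q (eta (p n)) - pgf (p n) (eta (p n)) ≤ ∑' k, |p n k - q k| := by
          have := abs_le.1 hdist
          linarith [this.1]
        linarith
      rw [(hηn n).2] at this
      exact lt_irrefl _ this
  have hupper : ∀ᶠ n in atTop, eta (p n) < eta q + ε := by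
    by_cases hcase : eta q < 1
    · obtain ⟨m, hm0, hmε, hm1⟩ : ∃ m : ℝ, 0 < m ∧ m ≤ ε ∧ m ≤ 1 - eta q :=
        ⟨min ε (1 - eta q), lt_min hε (by linarith), min_le_left _ _, min_le_right _ _⟩
      set t := eta q + m / 2 with htdef
      have htIoo : t ∈ Set.Ioo (eta q) 1 := by
        constructor
        · rw [htdef]; linarith
        · rw [htdef]; linarith
      have htεlt : t < eta q + ε := by rw [htdef]; linarith
      have hGt := pgf_lt_of_gt_eta hq.1 hq.2 h0 hcase htIoo
      have hδ'pos : 0 < t - pgf q t := by linarith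
      filter_upwards [htv.eventually (gt_mem_nhds hδ'pos)] with n hn
      -- pgf (p n) t < t
      have habst : |t| ≤ 1 := abs_le.2 ⟨by linarith [hqmem.1, htIoo.1], htIoo.2.le⟩
      have hdist := pgf_dist_le (hp n).1 hq.1 (hp n).2.summable hq.2.summable habst
      have hGnt : pgf (p n) t < t := by
        have := abs_le.1 hdist
        linarith [this.2]
      -- IVT on [0, t]
      have ht0 : (0:ℝ) ≤ t := by linarith [hqmem.1, htIoo.1.le]
      have hcont : ContinuousOn (fun x => pgf (p n) x - x) (Set.Icc 0 t) :=
        ((pgf_continuousOn (hp n).1 (hp n).2.summable).mono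
          (Set.Icc_subset_Icc le_rfl htIoo.2.le)).sub continuousOn_id
      have hIV := intermediate_value_Icc' ht0 hcont
      have h0mem : (0:ℝ) ∈ Set.Icc ((fun x => pgf (p n) x - x) t)
          ((fun x => pgf (p n) x - x) 0) := by
        constructor
        · simp only []; linarith
        · simp only [pgf_zero, sub_zero]; exact (hp n).1 0
      obtain ⟨c, hcmem, hc⟩ := hIV h0mem
      have hcfix : pgf (p n) c = c := by
        have : pgf (p n) c - c = 0 := hc
        linarith
      have : eta (p n) ≤ c := eta_le (hp n).2 ⟨hcmem.1, le_trans hcmem.2 htIoo.2.le⟩ hcfix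
      linarith [hcmem.2]
    · push_neg at hcase
      exact Eventually.of_forall (fun n => lt_of_le_of_lt (hηn n).1.2 (by linarith))
  filter_upwards [hlower, hupper] with n h1 h2
  rw [Real.dist_eq, abs_lt]
  constructor <;> linarith
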